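/- (Theorem 2, gradient part) Let f₁, …, f_N : ℝ^d → ℝ be continuously differentiable with each gradient ∇f_i being L₁-Lipschitz, and let F := (1/N)∑_{i=1}^N f_i. Fix x, x̃ ∈ ℝ^d, a vector s ∈ ℝ^d, ε₁ > 0, β > 0, and 0 < ζ < 1. Let i₁, …, i_n be independent indices each uniform on {1, …, N} (sampling with replacement), and define the variance-reduced gradient estimate g := (1/n)∑_{j=1}^{n}(∇f_{i_j}(x) − ∇f_{i_j}(x̃)) + ∇F(x̃). If n ≥ ( (8L₁²/(β²·max{‖s‖⁴, ε₁⁴}))·‖x − x̃‖² + (4L₁/(3β·max{‖s‖², ε₁²}))·‖x − x̃‖ )·log(2(d+1)/ζ), then with probability at least 1 − ζ, ‖g − ∇F(x)‖ ≤ β·max{‖s‖², ε₁²}. -/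

import Mathlib

open Real

/-- φ(s) = (s-2)e^s + s + 2 ≥ 0 for s ≥ 0. -/
lemma phi_nonneg {s : ℝ} (hs : 0 ≤ s) : 0 ≤ (s - 2) * exp s + s + 2 := by
  have h2 : ∀ t : ℝ, 0 ≤ t → 0 ≤ (t - 1) * exp t + 1 := by
    intro t ht
    have hmono : MonotoneOn (fun t : ℝ => (t - 1) * exp t + 1) (Set.Ici 0) := by
      apply monotoneOn_of_deriv_nonneg (convex_Ici 0)
      · fun_prop
      · fun_prop
      · intro y hy
        have hd : HasDerivAt (fun t : ℝ => (t - 1) * exp t + 1) (y * exp y) y := by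
          have := (((hasDerivAt_id y).sub_const 1).mul (Real.hasDerivAt_exp y)).add_const 1
          simp only [id_eq] at this
          exact this.congr_deriv (by ring)
        rw [hd.deriv]
        have : (0:ℝ) ≤ y := le_of_lt (by simpa using hy)
        positivity
    have := hmono (by simp : (0:ℝ) ∈ Set.Ici 0) (by simpa using ht) ht
    simpa using this
  have hmono : MonotoneOn (fun s : ℝ => (s - 2) * exp s + s + 2) (Set.Ici 0) := by
    apply monotoneOn_of_deriv_nonneg (convex_Ici 0)
    · fun_prop
    · fun_prop
    · intro y hy
      have hd : HasDerivAt (fun s : ℝ => (s - 2) * exp s + s + 2) ((y - 1) * exp y + 1) y := by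
        have := ((((hasDerivAt_id y).sub_const 2).mul (Real.hasDerivAt_exp y)).add (hasDerivAt_id y)).add_const 2
        simp only [id_eq] at this
        exact this.congr_deriv (by ring)
      rw [hd.deriv]
      exact h2 y (le_of_lt (by simpa using hy))
  have := hmono (by simp : (0:ℝ) ∈ Set.Ici 0) (by simpa using hs) hs
  simpa using this

/-- (e^x - 1 - x)/x² is monotone: for 0 ≤ x ≤ z, (e^x-1-x) z² ≤ (e^z-1-z) x². -/
lemma psi_ratio_mono {x z : ℝ} (hx : 0 ≤ x) (hxz : x ≤ z) :
    (exp x - 1 - x) * z ^ 2 ≤ (exp z - 1 - z) * x ^ 2 := by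
  rcases eq_or_lt_of_le hx with h0 | hx0
  · have h1 : exp x - 1 - x = 0 := by rw [← h0]; simp
    rw [h1]
    have hz : 0 ≤ z := le_trans hx hxz
    have := Real.add_one_le_exp z
    nlinarith [sq_nonneg x]
  · have hz0 : 0 < z := lt_of_lt_of_le hx0 hxz
    have hmono : MonotoneOn (fun t : ℝ => (exp t - 1 - t) / t ^ 2) (Set.Ioi 0) := by
      apply monotoneOn_of_deriv_nonneg (convex_Ioi 0)
      · apply ContinuousOn.div (by fun_prop) (by fun_prop)
        intro t ht; have : (0:ℝ) < t := by simpa using ht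
        positivity
      · rw [interior_Ioi]
        intro t ht
        have ht0 : (0:ℝ) < t := by simpa using ht
        exact (DifferentiableAt.div (by fun_prop) (by fun_prop) (by positivity)).differentiableWithinAt
      · rw [interior_Ioi]
        intro t ht
        have ht0 : (0:ℝ) < t := by simpa using ht
        have hd := (((Real.hasDerivAt_exp t).sub_const 1).sub (hasDerivAt_id t)).div
            (hasDerivAt_pow 2 t) (by positivity : t ^ 2 ≠ 0)
        norm_num at hd
        rw [show deriv (fun t => (rexp t - 1 - t) / t ^ 2) t = _ from hd.deriv]
        apply div_nonneg _ (by positivity)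
        have := phi_nonneg (le_of_lt ht0)
        have h1 : (0:ℝ) ≤ ((t - 2) * exp t + t + 2) * t := by
          apply mul_nonneg this (le_of_lt ht0)
        nlinarith [h1]
    have := hmono (Set.mem_Ioi.mpr hx0) (Set.mem_Ioi.mpr (lt_of_lt_of_le hx0 hxz)) hxz
    rw [div_le_div_iff₀ (by positivity) (by positivity)] at this
    linarith

/-- Bernstein: (e^s - 1 - s)(1 - s/3) ≤ s²/2 for s ≥ 0. -/
lemma psi_bound {s : ℝ} (hs : 0 ≤ s) : (exp s - 1 - s) * (1 - s / 3) ≤ s ^ 2 / 2 := by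
  have hmono : MonotoneOn (fun s : ℝ => s ^ 2 / 2 - (exp s - 1 - s) * (1 - s / 3)) (Set.Ici 0) := by
    apply monotoneOn_of_deriv_nonneg (convex_Ici 0)
    · fun_prop
    · fun_prop
    · intro y hy
      have hy0 : (0:ℝ) < y := by simpa using hy
      have hd : HasDerivAt (fun s : ℝ => s ^ 2 / 2 - (exp s - 1 - s) * (1 - s / 3))
          ((2 * y ^ 1) / 2 - ((exp y - 1) * (1 - y / 3) + (exp y - 1 - y) * (0 - 1/3))) y := by
        exact ((hasDerivAt_pow 2 y).div_const 2).sub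
          ((((Real.hasDerivAt_exp y).sub_const 1).sub (hasDerivAt_id y)).mul
            (((hasDerivAt_const y (1:ℝ)).sub ((hasDerivAt_id y).div_const 3)))) |>.congr_deriv (by norm_num)
      rw [hd.deriv]
      have hphi := phi_nonneg (le_of_lt hy0)
      nlinarith [hphi]
  have := hmono (by simp : (0:ℝ) ∈ Set.Ici 0) (by simpa using hs) hs
  simp only at this
  simp at this
  linarith

/-- cosh b ≤ 1 + (b²/z²)(e^z - 1 - z) for |b| ≤ z, 0 < z. -/
lemma cosh_le_one_add {b z : ℝ} (hz : 0 < z) (hb : |b| ≤ z) :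
    cosh b ≤ 1 + b ^ 2 / z ^ 2 * (exp z - 1 - z) := by
  rw [← Real.cosh_abs]
  rcases eq_or_lt_of_le (abs_nonneg b) with h0 | h0
  · rw [← h0, Real.cosh_zero]
    have := Real.add_one_le_exp z
    have : 0 ≤ b ^ 2 / z ^ 2 * (exp z - 1 - z) := by
      apply mul_nonneg (by positivity); linarith
    linarith
  · have h1 : cosh |b| - 1 ≤ exp |b| - 1 - |b| := by
      have hsinh : |b| ≤ sinh |b| := le_of_lt ((Real.self_lt_sinh_iff).mpr h0)
      have : exp |b| = cosh |b| + sinh |b| := by rw [Real.cosh_add_sinh]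
      linarith
    have h2 := psi_ratio_mono (le_of_lt h0) hb
    have h3 : (exp |b| - 1 - |b|) ≤ b ^ 2 / z ^ 2 * (exp z - 1 - z) := by
      rw [div_mul_eq_mul_div, le_div_iff₀ (by positivity)]
      calc (exp |b| - 1 - |b|) * z ^ 2 ≤ (exp z - 1 - z) * |b| ^ 2 := h2
        _ = (exp z - 1 - z) * b ^ 2 := by rw [sq_abs]
        _ = b ^ 2 * (exp z - 1 - z) := by ring
    linarith

open Real Finset

variable {E : Type*} [NormedAddCommGroup E] [InnerProductSpace ℝ E]

section onestep
variable {α : Type*} [Fintype α] [Nonempty α]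

/-- One-step mgf bound via symmetrization. -/
lemma one_step (v : α → E) (h : α → ℝ) (l R₀ C : ℝ) (hl : 0 < l) (hR0 : 0 < R₀)
    (hlip : ∀ i i', |h i - h i'| ≤ ‖v i - v i'‖)
    (hR : ∀ i i', ‖v i - v i'‖ ≤ R₀)
    (hC : ∑ i : α, ∑ i' : α, ‖v i - v i'‖ ^ 2 ≤ (Fintype.card α : ℝ) ^ 2 * C) :
    ∑ i : α, exp (l * (h i - (∑ i' : α, h i') / (Fintype.card α : ℝ)))
      ≤ (Fintype.card α : ℝ) * exp (C * (exp (l * R₀) - 1 - l * R₀) / R₀ ^ 2) := by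
  set K : ℝ := (Fintype.card α : ℝ) with hK
  have hKpos : 0 < K := by
    simp only [hK]; exact_mod_cast Fintype.card_pos
  set μ : ℝ := (∑ i' : α, h i') / K with hμ
  set ψ : ℝ := exp (l * R₀) - 1 - l * R₀ with hψ
  have hψ0 : 0 ≤ ψ := by
    have := Real.add_one_le_exp (l * R₀); simp only [hψ]; linarith
  -- Step 1: Jensen
  have step1 : (∑ i : α, exp (l * (h i - μ))) * K ≤
      ∑ i : α, ∑ i' : α, exp (l * (h i - h i')) := by
    have hinner : K ≤ ∑ i' : α, exp (l * (μ - h i')) := by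
      calc K = ∑ i' : α, (1 + l * (μ - h i')) := by
              rw [Finset.sum_add_distrib]
              simp only [Finset.sum_const, Finset.card_univ, nsmul_eq_mul, mul_one]
              rw [← Finset.mul_sum, Finset.sum_sub_distrib]
              simp only [Finset.sum_const, Finset.card_univ, nsmul_eq_mul]
              have : (Fintype.card α : ℝ) * μ - ∑ i' : α, h i' = 0 := by
                rw [hμ, ← hK]; field_simp; ring
              rw [this]; ring
        _ ≤ ∑ i' : α, exp (l * (μ - h i')) := by
              apply Finset.sum_le_sum; intro i _
              have := Real.add_one_le_exp (l * (μ - h i)); linarith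
    calc (∑ i : α, exp (l * (h i - μ))) * K
        ≤ (∑ i : α, exp (l * (h i - μ))) * (∑ i' : α, exp (l * (μ - h i'))) := by
          apply mul_le_mul_of_nonneg_left hinner
          apply Finset.sum_nonneg; intro i _; positivity
      _ = ∑ i : α, ∑ i' : α, exp (l * (h i - μ)) * exp (l * (μ - h i')) := by
          rw [Finset.sum_mul_sum]
      _ = ∑ i : α, ∑ i' : α, exp (l * (h i - h i')) := by
          apply Finset.sum_congr rfl; intro i _
          apply Finset.sum_congr rfl; intro i' _
          rw [← Real.exp_add]; ring_nf
  -- Step 2: symmetrize to cosh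
  have step2 : ∑ i : α, ∑ i' : α, exp (l * (h i - h i'))
      = ∑ i : α, ∑ i' : α, cosh (l * (h i - h i')) := by
    have hswap : ∑ i : α, ∑ i' : α, exp (l * (h i - h i'))
        = ∑ i : α, ∑ i' : α, exp (-(l * (h i - h i'))) := by
      rw [Finset.sum_comm]
      apply Finset.sum_congr rfl; intro i _
      apply Finset.sum_congr rfl; intro i' _
      ring_nf
    have : (2:ℝ) * ∑ i : α, ∑ i' : α, exp (l * (h i - h i'))
        = 2 * ∑ i : α, ∑ i' : α, cosh (l * (h i - h i')) := by
      calc (2:ℝ) * ∑ i : α, ∑ i' : α, exp (l * (h i - h i'))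
          = (∑ i : α, ∑ i' : α, exp (l * (h i - h i')))
            + ∑ i : α, ∑ i' : α, exp (-(l * (h i - h i'))) := by rw [← hswap]; ring
        _ = ∑ i : α, ∑ i' : α, (exp (l * (h i - h i')) + exp (-(l * (h i - h i')))) := by
            rw [← Finset.sum_add_distrib]
            apply Finset.sum_congr rfl; intro i _
            rw [← Finset.sum_add_distrib]
        _ = 2 * ∑ i : α, ∑ i' : α, cosh (l * (h i - h i')) := by
            rw [Finset.mul_sum]
            apply Finset.sum_congr rfl; intro i _
            rw [Finset.mul_sum]
            apply Finset.sum_congr rfl; intro i' _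
            rw [Real.cosh_eq]; ring
    linarith
  -- Step 3: pointwise cosh bound
  have step3 : ∑ i : α, ∑ i' : α, cosh (l * (h i - h i'))
      ≤ K ^ 2 * (1 + C * ψ / R₀ ^ 2) := by
    calc ∑ i : α, ∑ i' : α, cosh (l * (h i - h i'))
        ≤ ∑ i : α, ∑ i' : α, (1 + ‖v i - v i'‖ ^ 2 * ψ / R₀ ^ 2) := by
          apply Finset.sum_le_sum; intro i _
          apply Finset.sum_le_sum; intro i' _
          have hb : |l * (h i - h i')| ≤ l * R₀ := by
            rw [abs_mul, abs_of_pos hl]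
            exact mul_le_mul_of_nonneg_left ((hlip i i').trans (hR i i')) (le_of_lt hl)
          have := cosh_le_one_add (by positivity : (0:ℝ) < l * R₀) hb
          have hb2 : (l * (h i - h i')) ^ 2 / (l * R₀) ^ 2 * ψ
              ≤ ‖v i - v i'‖ ^ 2 * ψ / R₀ ^ 2 := by
            rw [div_mul_eq_mul_div, div_le_div_iff₀ (by positivity) (by positivity)]
            have h1 : (l * (h i - h i')) ^ 2 ≤ l ^ 2 * ‖v i - v i'‖ ^ 2 := by
              have := hlip i i'
              have habs : (h i - h i') ^ 2 ≤ ‖v i - v i'‖ ^ 2 := by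
                rw [← sq_abs (h i - h i')]
                exact pow_le_pow_left₀ (abs_nonneg _) this 2
              calc (l * (h i - h i')) ^ 2 = l ^ 2 * (h i - h i') ^ 2 := by ring
                _ ≤ l ^ 2 * ‖v i - v i'‖ ^ 2 := by nlinarith [sq_nonneg l]
            calc (l * (h i - h i')) ^ 2 * ψ * R₀ ^ 2
                ≤ l ^ 2 * ‖v i - v i'‖ ^ 2 * ψ * R₀ ^ 2 := by
                  apply mul_le_mul_of_nonneg_right _ (by positivity)
                  exact mul_le_mul_of_nonneg_right h1 hψ0
              _ = ‖v i - v i'‖ ^ 2 * ψ * (l * R₀) ^ 2 := by ring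
          linarith
      _ = K ^ 2 + (∑ i : α, ∑ i' : α, ‖v i - v i'‖ ^ 2) * ψ / R₀ ^ 2 := by
          have hsum : (∑ i : α, ∑ i' : α, ‖v i - v i'‖ ^ 2) * ψ / R₀ ^ 2
              = ∑ i : α, ∑ i' : α, ‖v i - v i'‖ ^ 2 * ψ / R₀ ^ 2 := by
            rw [Finset.sum_mul, Finset.sum_div]
            apply Finset.sum_congr rfl; intros
            rw [Finset.sum_mul, Finset.sum_div]
          rw [hsum]
          simp only [Finset.sum_add_distrib, Finset.sum_const, Finset.card_univ, nsmul_eq_mul,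
            mul_one]
          congr 1
          rw [hK]; ring
      _ ≤ K ^ 2 * (1 + C * ψ / R₀ ^ 2) := by
          have h1 : (∑ i : α, ∑ i' : α, ‖v i - v i'‖ ^ 2) * ψ / R₀ ^ 2
              ≤ K ^ 2 * C * ψ / R₀ ^ 2 := by
            apply div_le_div_of_nonneg_right _ (by positivity)
            · exact mul_le_mul_of_nonneg_right hC hψ0
          have h2 : K ^ 2 * (1 + C * ψ / R₀ ^ 2) = K ^ 2 + K ^ 2 * C * ψ / R₀ ^ 2 := by ring
          linarith
  -- combine
  have hcomb : (∑ i : α, exp (l * (h i - μ))) * K ≤ K ^ 2 * (1 + C * ψ / R₀ ^ 2) := by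
    calc (∑ i : α, exp (l * (h i - μ))) * K
        ≤ ∑ i : α, ∑ i' : α, exp (l * (h i - h i')) := step1
      _ = _ := step2
      _ ≤ _ := step3
  have hfin : ∑ i : α, exp (l * (h i - μ)) ≤ K * (1 + C * ψ / R₀ ^ 2) := by
    have := hcomb
    rw [show K ^ 2 * (1 + C * ψ / R₀ ^ 2) = (K * (1 + C * ψ / R₀ ^ 2)) * K by ring] at this
    exact le_of_mul_le_mul_right this hKpos
  calc ∑ i : α, exp (l * (h i - μ)) ≤ K * (1 + C * ψ / R₀ ^ 2) := hfin
    _ ≤ K * exp (C * ψ / R₀ ^ 2) := by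
        apply mul_le_mul_of_nonneg_left _ (le_of_lt hKpos)
        have := Real.add_one_le_exp (C * ψ / R₀ ^ 2); linarith

end onestep
section mgf
open Real Finset
variable {E : Type*} [NormedAddCommGroup E] [InnerProductSpace ℝ E]
variable {α : Type*} [Fintype α] [Nonempty α]

lemma sum_cons_eq (v : α → E) (m : ℕ) (a : α) (ι : Fin m → α) :
    ∑ j : Fin (m + 1), v ((Fin.cons a ι : Fin (m + 1) → α) j)
      = v a + ∑ j : Fin m, v (ι j) := by
  rw [Fin.sum_univ_succ]
  simp [Fin.cons_zero, Fin.cons_succ]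

lemma sum_pi_succ {β : Type*} [AddCommMonoid β] (m : ℕ) (F : (Fin (m + 1) → α) → β) :
    ∑ ι : Fin (m + 1) → α, F ι
      = ∑ a : α, ∑ ι : Fin m → α, F (Fin.cons a ι : Fin (m + 1) → α) := by
  rw [← (Fin.consEquiv (fun _ => α)).sum_comp F]
  rw [Fintype.sum_prod_type]
  rfl

lemma mgf_bound (v : α → E) (l R₀ C : ℝ) (hl : 0 < l) (hR0 : 0 < R₀)
    (hR : ∀ i i', ‖v i - v i'‖ ≤ R₀)
    (hC : ∑ i : α, ∑ i' : α, ‖v i - v i'‖ ^ 2 ≤ (Fintype.card α : ℝ) ^ 2 * C) :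
    ∀ (m : ℕ) (Φ : E → ℝ), (∀ a b, |Φ a - Φ b| ≤ ‖a - b‖) →
    ∑ ι : Fin m → α, exp (l * (Φ (∑ j, v (ι j))
        - (∑ κ : Fin m → α, Φ (∑ j, v (κ j))) / (Fintype.card α : ℝ) ^ m))
      ≤ (Fintype.card α : ℝ) ^ m
        * exp ((m : ℝ) * (C * (exp (l * R₀) - 1 - l * R₀) / R₀ ^ 2)) := by
  set K : ℝ := (Fintype.card α : ℝ) with hK
  have hKpos : 0 < K := by simp only [hK]; exact_mod_cast Fintype.card_pos
  set c : ℝ := C * (exp (l * R₀) - 1 - l * R₀) / R₀ ^ 2 with hc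
  intro m
  induction m with
  | zero =>
    intro Φ hΦ
    simp
  | succ m ih =>
    intro Φ hΦ
    set S : (Fin m → α) → E := fun ι => ∑ j, v (ι j) with hS
    set Φ' : E → ℝ := fun w => (∑ a : α, Φ (w + v a)) / K with hΦ'
    have hΦ'lip : ∀ a b, |Φ' a - Φ' b| ≤ ‖a - b‖ := by
      intro w w'
      have heq : Φ' w - Φ' w' = (∑ a : α, (Φ (w + v a) - Φ (w' + v a))) / K := by
        rw [hΦ']; rw [Finset.sum_sub_distrib, sub_div]
      rw [heq, abs_div, abs_of_pos hKpos, div_le_iff₀ hKpos]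
      calc |∑ a : α, (Φ (w + v a) - Φ (w' + v a))| ≤ ∑ a : α, |Φ (w + v a) - Φ (w' + v a)| :=
            Finset.abs_sum_le_sum_abs _ _
        _ ≤ ∑ a : α, ‖w - w'‖ := by
            apply Finset.sum_le_sum; intro a _
            have := hΦ (w + v a) (w' + v a)
            simpa using this
        _ = ‖w - w'‖ * K := by rw [Finset.sum_const, Finset.card_univ, nsmul_eq_mul, hK]; ring
    have h1 : ∀ (a : α) (ι : Fin m → α),
        Φ (∑ j : Fin (m + 1), v ((Fin.cons a ι : Fin (m + 1) → α) j)) = Φ (S ι + v a) := by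
      intro a ι; rw [sum_cons_eq]; rw [add_comm]
    have hmean : (∑ κ : Fin (m + 1) → α, Φ (∑ j, v (κ j))) / K ^ (m + 1)
        = (∑ κ : Fin m → α, Φ' (S κ)) / K ^ m := by
      rw [sum_pi_succ m (fun κ => Φ (∑ j, v (κ j)))]
      rw [show (∑ a : α, ∑ ι : Fin m → α,
            Φ (∑ j : Fin (m + 1), v ((Fin.cons a ι : Fin (m + 1) → α) j)))
          = ∑ ι : Fin m → α, ∑ a : α, Φ (S ι + v a) from by
        rw [Finset.sum_comm]
        exact Finset.sum_congr rfl fun ι _ => Finset.sum_congr rfl fun a _ => h1 a ι]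
      have h2 : ∀ ι : Fin m → α, (∑ a : α, Φ (S ι + v a)) = K * Φ' (S ι) := by
        intro ι; rw [hΦ']; field_simp
      rw [Finset.sum_congr rfl fun ι _ => h2 ι, ← Finset.mul_sum]
      rw [pow_succ, mul_comm (K ^ m) K, ← div_div]
      congr 1
      field_simp
    set μ : ℝ := (∑ κ : Fin m → α, Φ' (S κ)) / K ^ m with hμ
    calc ∑ ι : Fin (m + 1) → α, exp (l * (Φ (∑ j, v (ι j))
            - (∑ κ : Fin (m + 1) → α, Φ (∑ j, v (κ j))) / K ^ (m + 1)))
        = ∑ ι : Fin m → α, ∑ a : α, exp (l * (Φ (S ι + v a) - μ)) := by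
          rw [sum_pi_succ m]
          rw [Finset.sum_comm]
          apply Finset.sum_congr rfl; intro ι _
          apply Finset.sum_congr rfl; intro a _
          rw [hmean, h1 a ι]
      _ = ∑ ι : Fin m → α, exp (l * (Φ' (S ι) - μ))
            * ∑ a : α, exp (l * (Φ (S ι + v a) - Φ' (S ι))) := by
          apply Finset.sum_congr rfl; intro ι _
          rw [Finset.mul_sum]
          apply Finset.sum_congr rfl; intro a _
          rw [← Real.exp_add]; congr 1; ring
      _ ≤ ∑ ι : Fin m → α, exp (l * (Φ' (S ι) - μ)) * (K * exp c) := by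
          apply Finset.sum_le_sum; intro ι _
          apply mul_le_mul_of_nonneg_left _ (le_of_lt (Real.exp_pos _))
          have happ := one_step v (fun a => Φ (S ι + v a)) l R₀ C hl hR0
            (fun i i' => by
              have := hΦ (S ι + v i) (S ι + v i')
              simpa using this) hR hC
          have heq2 : (∑ a : α, Φ (S ι + v a)) / (Fintype.card α : ℝ) = Φ' (S ι) := by
            rw [hΦ', ← hK]
          rw [heq2] at happ
          exact happ
      _ = (K * exp c) * ∑ ι : Fin m → α, exp (l * (Φ' (S ι) - μ)) := by
          rw [← Finset.sum_mul]; ring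
      _ ≤ (K * exp c) * (K ^ m * exp ((m : ℝ) * c)) := by
          apply mul_le_mul_of_nonneg_left _ (by positivity)
          exact ih Φ' hΦ'lip
      _ = K ^ (m + 1) * exp (((m + 1 : ℕ) : ℝ) * c) := by
          rw [pow_succ]
          push_cast
          rw [show ((m : ℝ) + 1) * c = c + (m : ℝ) * c by ring, Real.exp_add]
          ring

end mgf
section secmom
open Real Finset
variable {E : Type*} [NormedAddCommGroup E] [InnerProductSpace ℝ E]
variable {α : Type*} [Fintype α] [Nonempty α]

lemma second_moment (v : α → E) (hzero : ∑ i : α, v i = 0) :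
    ∀ m : ℕ, (Fintype.card α : ℝ) * ∑ ι : Fin m → α, ‖∑ j, v (ι j)‖ ^ 2
      = (m : ℝ) * (Fintype.card α : ℝ) ^ m * ∑ i : α, ‖v i‖ ^ 2 := by
  set K : ℝ := (Fintype.card α : ℝ) with hK
  have hKpos : 0 < K := by simp only [hK]; exact_mod_cast Fintype.card_pos
  intro m
  induction m with
  | zero => simp
  | succ m ih =>
    have hcard : (Fintype.card (Fin m → α) : ℝ) = K ^ m := by
      rw [hK]; norm_cast; simp [Fintype.card_fun]
    have key : ∑ ι : Fin (m + 1) → α, ‖∑ j, v (ι j)‖ ^ 2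
        = K ^ m * (∑ i : α, ‖v i‖ ^ 2) + K * ∑ ι : Fin m → α, ‖∑ j, v (ι j)‖ ^ 2 := by
      rw [sum_pi_succ m (fun ι => ‖∑ j, v (ι j)‖ ^ 2)]
      have h1 : ∀ (a : α) (ι : Fin m → α),
          ‖∑ j : Fin (m + 1), v ((Fin.cons a ι : Fin (m + 1) → α) j)‖ ^ 2
            = ‖v a‖ ^ 2 + 2 * inner ℝ (v a) (∑ j : Fin m, v (ι j)) + ‖∑ j : Fin m, v (ι j)‖ ^ 2 := by
        intro a ι
        rw [sum_cons_eq]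
        exact norm_add_sq_real _ _
      rw [Finset.sum_congr rfl fun a _ => Finset.sum_congr rfl fun ι _ => h1 a ι]
      have h2 : ∀ a : α, ∑ ι : Fin m → α,
          (‖v a‖ ^ 2 + 2 * inner ℝ (v a) (∑ j : Fin m, v (ι j)) + ‖∑ j : Fin m, v (ι j)‖ ^ 2)
          = K ^ m * ‖v a‖ ^ 2 + 2 * inner ℝ (v a) (∑ ι : Fin m → α, ∑ j : Fin m, v (ι j))
            + ∑ ι : Fin m → α, ‖∑ j : Fin m, v (ι j)‖ ^ 2 := by
        intro a
        rw [Finset.sum_add_distrib, Finset.sum_add_distrib]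
        congr 1
        congr 1
        · rw [Finset.sum_const, Finset.card_univ, nsmul_eq_mul, hcard]
        · rw [← Finset.mul_sum, inner_sum]
      rw [Finset.sum_congr rfl fun a _ => h2 a]
      rw [Finset.sum_add_distrib, Finset.sum_add_distrib]
      have h3 : ∑ a : α, (2 : ℝ) * inner ℝ (v a) (∑ ι : Fin m → α, ∑ j : Fin m, v (ι j)) = 0 := by
        rw [← Finset.mul_sum, ← sum_inner, hzero]
        simp
      rw [h3]
      rw [← Finset.mul_sum, Finset.sum_const, Finset.card_univ, nsmul_eq_mul, ← hK]
      ring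
    rw [key]
    rw [mul_add, ih]
    push_cast
    ring

end secmom
section tail
open Real Finset
variable {E : Type*} [NormedAddCommGroup E] [InnerProductSpace ℝ E]
variable {α : Type*} [Fintype α] [Nonempty α]

lemma tail_count (v : α → E) (hzero : ∑ i : α, v i = 0) (R₀ W : ℝ) (hR0 : 0 < R₀)
    (hW : 0 < W)
    (hvR : ∀ i i', ‖v i - v i'‖ ≤ R₀)
    (hvW : ∑ i : α, ‖v i‖ ^ 2 ≤ (Fintype.card α : ℝ) * W)
    (n : ℕ) (ε : ℝ) (hε : Real.sqrt (n * W) < ε) :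
    ((Finset.univ.filter fun ι : Fin n → α => ε < ‖∑ j, v (ι j)‖).card : ℝ)
      ≤ (Fintype.card α : ℝ) ^ n
        * Real.exp (-(ε - Real.sqrt (n * W)) ^ 2
            / (2 * (2 * n * W + R₀ * (ε - Real.sqrt (n * W)) / 3))) := by
  classical
  set K : ℝ := (Fintype.card α : ℝ) with hK
  have hKpos : 0 < K := by simp only [hK]; exact_mod_cast Fintype.card_pos
  set T : (Fin n → α) → ℝ := fun ι => ‖∑ j, v (ι j)‖ with hT
  set μ : ℝ := (∑ κ : Fin n → α, T κ) / K ^ n with hμ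
  set s : ℝ := ε - Real.sqrt (n * W) with hs
  have hs0 : 0 < s := by simp only [hs]; linarith
  set D : ℝ := 2 * n * W + R₀ * s / 3 with hD
  have hD0 : 0 < D := by
    have h1 : (0:ℝ) ≤ 2 * n * W := by positivity
    have h2 : 0 < R₀ * s / 3 := by positivity
    simp only [hD]; linarith
  set l : ℝ := s / D with hl
  have hl0 : 0 < l := by positivity
  set C : ℝ := 2 * W with hC
  -- variance bound for pairs
  have hpair : ∑ i : α, ∑ i' : α, ‖v i - v i'‖ ^ 2 ≤ K ^ 2 * C := by
    have hexp : ∀ i i' : α, ‖v i - v i'‖ ^ 2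
        = ‖v i‖ ^ 2 - 2 * inner ℝ (v i) (v i') + ‖v i'‖ ^ 2 := fun i i' => norm_sub_sq_real _ _
    calc ∑ i : α, ∑ i' : α, ‖v i - v i'‖ ^ 2
        = ∑ i : α, (K * ‖v i‖ ^ 2 - 2 * inner ℝ (v i) (∑ i' : α, v i') + ∑ i' : α, ‖v i'‖ ^ 2) := by
          apply Finset.sum_congr rfl; intro i _
          rw [Finset.sum_congr rfl fun i' _ => hexp i i']
          rw [Finset.sum_add_distrib, Finset.sum_sub_distrib]
          congr 2
          · rw [Finset.sum_const, Finset.card_univ, nsmul_eq_mul, hK]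
          · rw [← Finset.mul_sum, inner_sum]
      _ = K * ∑ i : α, ‖v i‖ ^ 2 + K * ∑ i' : α, ‖v i'‖ ^ 2 := by
          rw [hzero]
          simp only [inner_zero_right, mul_zero, sub_zero]
          rw [Finset.sum_add_distrib, ← Finset.mul_sum, Finset.sum_const, Finset.card_univ,
            nsmul_eq_mul, ← hK]
      _ ≤ K * (K * W) + K * (K * W) := by
          have h := mul_le_mul_of_nonneg_left hvW (le_of_lt hKpos)
          linarith [h]
      _ = K ^ 2 * C := by rw [hC]; ring
  -- second moment / mean bound
  have hsum2 : ∑ ι : Fin n → α, T ι ^ 2 ≤ (n : ℝ) * K ^ n * W := by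
    have hsm := second_moment v hzero n
    rw [← hK] at hsm
    have h2 : K * ∑ ι : Fin n → α, T ι ^ 2 ≤ K * ((n : ℝ) * K ^ n * W) := by
      simp only [hT]
      rw [hsm]
      calc (n : ℝ) * K ^ n * ∑ i : α, ‖v i‖ ^ 2
          ≤ (n : ℝ) * K ^ n * (K * W) := mul_le_mul_of_nonneg_left hvW (by positivity)
        _ = K * ((n : ℝ) * K ^ n * W) := by ring
    exact (mul_le_mul_iff_right₀ hKpos).mp h2
  have hμle : μ ≤ Real.sqrt ((n : ℝ) * W) := by
    have hTnn : ∀ ι : Fin n → α, 0 ≤ T ι := fun ι => norm_nonneg _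
    have hcs : (∑ ι : Fin n → α, T ι) ^ 2 ≤ (Fintype.card (Fin n → α) : ℝ) * ∑ ι, T ι ^ 2 := by
      exact_mod_cast sq_sum_le_card_mul_sum_sq (s := Finset.univ) (f := T)
    have hcard : (Fintype.card (Fin n → α) : ℝ) = K ^ n := by
      rw [hK]; norm_cast; simp [Fintype.card_fun]
    rw [hcard] at hcs
    have h1 : (∑ ι : Fin n → α, T ι) ^ 2 ≤ K ^ n * ((n : ℝ) * K ^ n * W) :=
      le_trans hcs (mul_le_mul_of_nonneg_left hsum2 (by positivity))
    have h2 : (∑ ι : Fin n → α, T ι) ≤ K ^ n * Real.sqrt ((n : ℝ) * W) := by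
      have hnn : 0 ≤ ∑ ι : Fin n → α, T ι := Finset.sum_nonneg fun ι _ => hTnn ι
      have hrhs : (K ^ n * Real.sqrt ((n : ℝ) * W)) ^ 2 = K ^ n * ((n : ℝ) * K ^ n * W) := by
        rw [mul_pow, Real.sq_sqrt (by positivity)]; ring
      have hBnn : (0:ℝ) ≤ K ^ n * Real.sqrt ((n : ℝ) * W) := by positivity
      calc ∑ ι : Fin n → α, T ι = Real.sqrt ((∑ ι : Fin n → α, T ι) ^ 2) :=
            (Real.sqrt_sq hnn).symm
        _ ≤ Real.sqrt ((K ^ n * Real.sqrt ((n : ℝ) * W)) ^ 2) :=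
            Real.sqrt_le_sqrt (by rw [hrhs]; exact h1)
        _ = K ^ n * Real.sqrt ((n : ℝ) * W) := Real.sqrt_sq hBnn
    rw [hμ, div_le_iff₀ (by positivity)]
    calc ∑ κ : Fin n → α, T κ ≤ K ^ n * Real.sqrt ((n : ℝ) * W) := h2
      _ = Real.sqrt ((n : ℝ) * W) * K ^ n := by ring
  -- mgf bound
  have hmgf := mgf_bound v l R₀ C hl0 hR0 hvR hpair n (fun w => ‖w‖)
    (fun a b => abs_norm_sub_norm_le a b)
  rw [← hK] at hmgf
  -- Chernoff count
  set ψ : ℝ := exp (l * R₀) - 1 - l * R₀ with hψ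
  have hcount : ((Finset.univ.filter fun ι : Fin n → α => ε < T ι).card : ℝ) * exp (l * s)
      ≤ K ^ n * exp ((n : ℝ) * (C * ψ / R₀ ^ 2)) := by
    calc ((Finset.univ.filter fun ι : Fin n → α => ε < T ι).card : ℝ) * exp (l * s)
        = ∑ ι ∈ Finset.univ.filter fun ι : Fin n → α => ε < T ι, exp (l * s) := by
          rw [Finset.sum_const, nsmul_eq_mul]
      _ ≤ ∑ ι ∈ Finset.univ.filter fun ι : Fin n → α => ε < T ι, exp (l * (T ι - μ)) := by
          apply Finset.sum_le_sum; intro ι hι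
          have hι' : ε < T ι := by simpa using (Finset.mem_filter.mp hι).2
          apply Real.exp_le_exp.mpr
          apply mul_le_mul_of_nonneg_left _ (le_of_lt hl0)
          have : μ ≤ Real.sqrt ((n:ℝ) * W) := hμle
          have hcast : Real.sqrt ((n:ℝ) * W) = Real.sqrt (n * W) := by norm_num
          rw [hs]; rw [hcast] at this; linarith
      _ ≤ ∑ ι : Fin n → α, exp (l * (T ι - μ)) := by
          apply Finset.sum_le_sum_of_subset_of_nonneg (Finset.filter_subset _ _)
          intro ι _ _; positivity
      _ ≤ K ^ n * exp ((n : ℝ) * (C * ψ / R₀ ^ 2)) := hmgf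
  -- exponent arithmetic
  have hexp : (n : ℝ) * (C * ψ / R₀ ^ 2) - l * s ≤ -s ^ 2 / (2 * D) := by
    have hlR : 0 ≤ l * R₀ := by positivity
    have hpsi := psi_bound hlR
    have hψ0 : 0 ≤ ψ := by
      have := Real.add_one_le_exp (l * R₀); simp only [hψ]; linarith
    have h1 : 1 - l * R₀ / 3 = 2 * n * W / D := by
      rw [hl]; field_simp; ring
    have h2 : ψ * (2 * n * W / D) ≤ (l * R₀) ^ 2 / 2 := by rw [← h1]; exact hpsi
    have h3 : (n : ℝ) * (C * ψ / R₀ ^ 2) ≤ l * s / 2 := by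
      have hD2 : ψ * (2 * n * W) ≤ D * (l * R₀) ^ 2 / 2 := by
        have h2' := mul_le_mul_of_nonneg_left h2 (le_of_lt hD0)
        have e1 : D * (ψ * (2 * ↑n * W / D)) = ψ * (2 * ↑n * W) := by
          field_simp
        have e2 : D * ((l * R₀) ^ 2 / 2) = D * (l * R₀) ^ 2 / 2 := by ring
        linarith [h2', e1.le, e1.ge, e2.le, e2.ge]
      have hls : l * D = s := by rw [hl]; field_simp
      have : (n : ℝ) * (C * ψ / R₀ ^ 2) = ψ * (2 * n * W) / R₀ ^ 2 := by rw [hC]; ring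
      rw [this]
      rw [div_le_iff₀ (by positivity : (0:ℝ) < R₀ ^ 2)]
      calc ψ * (2 * n * W) ≤ D * (l * R₀) ^ 2 / 2 := hD2
        _ = (l * D) * l * R₀ ^ 2 / 2 := by ring
        _ = s * l * R₀ ^ 2 / 2 := by rw [hls]
        _ = l * s / 2 * R₀ ^ 2 := by ring
    have h4 : l * s = s ^ 2 / D := by rw [hl]; field_simp
    rw [h4] at h3 ⊢
    have : s ^ 2 / D / 2 - s ^ 2 / D = -s ^ 2 / (2 * D) := by field_simp; ring
    linarith [h3, this.le, this.ge]
  -- finish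
  have hfin : ((Finset.univ.filter fun ι : Fin n → α => ε < T ι).card : ℝ)
      ≤ K ^ n * exp (-s ^ 2 / (2 * D)) := by
    have hpos : 0 < exp (l * s) := Real.exp_pos _
    rw [← le_div_iff₀ hpos] at hcount
    calc ((Finset.univ.filter fun ι : Fin n → α => ε < T ι).card : ℝ)
        ≤ K ^ n * exp ((n : ℝ) * (C * ψ / R₀ ^ 2)) / exp (l * s) := hcount
      _ = K ^ n * exp ((n : ℝ) * (C * ψ / R₀ ^ 2) - l * s) := by
          rw [Real.exp_sub]; ring
      _ ≤ K ^ n * exp (-s ^ 2 / (2 * D)) := by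
          apply mul_le_mul_of_nonneg_left (Real.exp_le_exp.mpr hexp) (by positivity)
  exact hfin

end tail
lemma numeric_core {u a L n : ℝ} (hu : 0 < u) (ha : 0 < a) (hL : Real.log 2 ≤ L)
    (hn : (8 * u ^ 2 + 4 / 3 * u) * (L + a) ≤ n) :
    u < Real.sqrt n ∧
      4 * a * u ^ 2 + 4 / 3 * a * u ≤ (Real.sqrt n - u) ^ 2 := by
  have hlog2 : (0.6931471803 : ℝ) < Real.log 2 := Real.log_two_gt_d9
  set w : ℝ := Real.sqrt (4 * a * u ^ 2 + 4 / 3 * a * u) with hw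
  have hwsq : w ^ 2 = 4 * a * u ^ 2 + 4 / 3 * a * u := Real.sq_sqrt (by positivity)
  have hw0 : 0 < w := Real.sqrt_pos.mpr (by positivity)
  -- 2 u w ≤ (3 + 2a) u² + (2/3) u
  have h2uw : 2 * u * w ≤ (3 + 2 * a) * u ^ 2 + 2 / 3 * u := by
    have hA : 0 < 1 + 2 * a := by linarith
    have h1 : 2 * ((1 + 2 * a) * u) * w ≤ (1 + 2 * a) ^ 2 * u ^ 2 + w ^ 2 := by
      nlinarith [sq_nonneg ((1 + 2 * a) * u - w)]
    have h2 : w ^ 2 ≤ (1 + 2 * a) * (2 * u ^ 2 + 2 / 3 * u) := by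
      rw [hwsq]; nlinarith [sq_nonneg u, hu.le]
    nlinarith [h1, h2, hA]
  have hkey : (u + w) ^ 2 ≤ n := by
    have hexp : (u + w) ^ 2 = u ^ 2 + 2 * u * w + w ^ 2 := by ring
    nlinarith [hn, hwsq, h2uw, sq_nonneg u, hu.le, ha.le, hlog2, hL,
      mul_pos hu hu, mul_pos ha (mul_pos hu hu), mul_pos ha hu]
  have hle : u + w ≤ Real.sqrt n := by
    have := Real.sqrt_le_sqrt hkey
    rwa [Real.sqrt_sq (by positivity)] at this
  constructor
  · linarith
  · have h3 : w ≤ Real.sqrt n - u := by linarith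
    calc 4 * a * u ^ 2 + 4 / 3 * a * u = w ^ 2 := hwsq.symm
      _ ≤ (Real.sqrt n - u) ^ 2 := by nlinarith [hw0.le, h3]
lemma chern_arith {a u X P : ℝ} (ha : 0 < a) (hu : 0 < u) (hX : 0 < X) (hP : 0 < P)
    (hweak : 4 * a * u ^ 2 + 4 / 3 * a * u ≤ (X - u) ^ 2) :
    a * (2 * (2 * X ^ 2 * (u * P) ^ 2 + 2 * (u * P) * (P * (X * X - X * u)) / 3))
      ≤ (P * (X * X - X * u)) ^ 2 := by
  nlinarith [mul_le_mul_of_nonneg_left hweak (by positivity : (0:ℝ) ≤ X ^ 2 * P ^ 2),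
    mul_nonneg (mul_nonneg (mul_nonneg (mul_nonneg ha.le hu.le) hu.le) (mul_pos hP hP).le) hX.le]

lemma sq_max_eq {a b : ℝ} (ha : 0 ≤ a) (hb : 0 ≤ b) :
    max (a ^ 2) (b ^ 2) = (max a b) ^ 2 := by
  rcases le_total a b with h | h
  · rw [max_eq_right h, max_eq_right (by nlinarith : a ^ 2 ≤ b ^ 2)]
  · rw [max_eq_left h, max_eq_left (by nlinarith : b ^ 2 ≤ a ^ 2)]

set_option maxHeartbeats 1000000 in
theorem stmt16 (d N n : ℕ) (hN : 0 < N) (hn : 0 < n)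
    (f : Fin N → EuclideanSpace ℝ (Fin d) → ℝ) (L₁ : ℝ)
    (hf : ∀ i, ContDiff ℝ 1 (f i))
    (hLip : ∀ i, ∀ x y : EuclideanSpace ℝ (Fin d),
      ‖gradient (f i) x - gradient (f i) y‖ ≤ L₁ * ‖x - y‖)
    (x xt s : EuclideanSpace ℝ (Fin d)) (ε₁ β ζ : ℝ)
    (hε₁ : 0 < ε₁) (hβ : 0 < β) (hζ : 0 < ζ) (hζ1 : ζ < 1)
    (hsize : (8 * L₁ ^ 2 / (β ^ 2 * max (‖s‖ ^ 4) (ε₁ ^ 4)) * ‖x - xt‖ ^ 2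
        + 4 * L₁ / (3 * β * max (‖s‖ ^ 2) (ε₁ ^ 2)) * ‖x - xt‖)
        * Real.log (2 * (d + 1) / ζ) ≤ (n : ℝ)) :
    1 - ζ ≤ ((Finset.univ.filter fun ι : Fin n → Fin N =>
        ‖(1 / n : ℝ) • ∑ j : Fin n, (gradient (f (ι j)) x - gradient (f (ι j)) xt)
            + gradient (fun z => (1 / N : ℝ) * ∑ i : Fin N, f i z) xt
            - gradient (fun z => (1 / N : ℝ) * ∑ i : Fin N, f i z) x‖
          ≤ β * max (‖s‖ ^ 2) (ε₁ ^ 2)).card : ℝ)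
      / (Fintype.card (Fin n → Fin N) : ℝ) := by
  classical
  haveI : Nonempty (Fin N) := ⟨⟨0, hN⟩⟩
  set M : ℝ := max (‖s‖ ^ 2) (ε₁ ^ 2) with hM
  have hM0 : 0 < M := lt_of_lt_of_le (by positivity) (le_max_right _ _)
  set r : ℝ := ‖x - xt‖ with hr
  have hr0 : 0 ≤ r := norm_nonneg _
  set Δ : Fin N → EuclideanSpace ℝ (Fin d) := fun i => gradient (f i) x - gradient (f i) xt with hΔ
  have hΔle : ∀ i, ‖Δ i‖ ≤ L₁ * r := fun i => hLip i x xt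
  -- gradient linearity
  have hgrad : ∀ y : EuclideanSpace ℝ (Fin d), gradient (fun z => (1 / N : ℝ) * ∑ i : Fin N, f i z) y
      = (1 / N : ℝ) • ∑ i : Fin N, gradient (f i) y := by
    intro y
    have hdi : ∀ i ∈ Finset.univ, DifferentiableAt ℝ (f i) y :=
      fun i _ => ((hf i).differentiable one_ne_zero).differentiableAt
    have hfd : fderiv ℝ (fun z => (1 / N : ℝ) * ∑ i : Fin N, f i z) y
        = (1 / N : ℝ) • ∑ i : Fin N, fderiv ℝ (f i) y := by
      rw [fderiv_const_mul (DifferentiableAt.fun_sum hdi) ((1 : ℝ) / N)]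
      rw [fderiv_fun_sum hdi]
    unfold gradient
    rw [hfd, map_smul, map_sum]
  set bb : EuclideanSpace ℝ (Fin d) := (1 / N : ℝ) • ∑ i : Fin N, Δ i with hbb
  have hgradsub : gradient (fun z => (1 / N : ℝ) * ∑ i : Fin N, f i z) xt
      - gradient (fun z => (1 / N : ℝ) * ∑ i : Fin N, f i z) x = -bb := by
    rw [hgrad, hgrad, hbb, hΔ]
    rw [← smul_sub, ← Finset.sum_sub_distrib]
    rw [← smul_neg, ← Finset.sum_neg_distrib]
    congr 1
    apply Finset.sum_congr rfl
    intro i _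
    abel
  set v : Fin N → EuclideanSpace ℝ (Fin d) := fun i => Δ i - bb with hv
  have hvzero : ∑ i : Fin N, v i = 0 := by
    rw [hv]
    simp only
    rw [Finset.sum_sub_distrib, Finset.sum_const, Finset.card_univ, Fintype.card_fin]
    rw [hbb, ← Nat.cast_smul_eq_nsmul ℝ N, smul_smul]
    rw [show (N : ℝ) * (1 / N) = 1 from by field_simp]
    rw [one_smul, sub_self]
  -- rewrite the event expression
  have hexpr : ∀ ι : Fin n → Fin N,
      (1 / n : ℝ) • ∑ j : Fin n, (gradient (f (ι j)) x - gradient (f (ι j)) xt)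
        + gradient (fun z => (1 / N : ℝ) * ∑ i : Fin N, f i z) xt
        - gradient (fun z => (1 / N : ℝ) * ∑ i : Fin N, f i z) x
      = (1 / n : ℝ) • ∑ j : Fin n, v (ι j) := by
    intro ι
    rw [add_sub_assoc, hgradsub]
    have h1 : ∑ j : Fin n, v (ι j) = (∑ j : Fin n, Δ (ι j)) - (n : ℝ) • bb := by
      rw [hv]
      simp only
      rw [Finset.sum_sub_distrib, Finset.sum_const, Finset.card_univ, Fintype.card_fin,
        Nat.cast_smul_eq_nsmul ℝ n]
    rw [h1, smul_sub, smul_smul]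
    rw [show (1 / (n:ℝ)) * (n : ℕ) = 1 from by field_simp]
    rw [one_smul]
    simp only [hΔ]
    abel
  -- total count
  have htotpos : 0 < (Fintype.card (Fin n → Fin N) : ℝ) := by
    have := Fintype.card_pos (α := Fin n → Fin N)
    exact_mod_cast this
  have htotal : (Fintype.card (Fin n → Fin N) : ℝ) = (N : ℝ) ^ n := by
    norm_cast
    simp [Fintype.card_fun]
  set P : ℝ := β * M with hP
  have hP0 : 0 < P := by positivity
  -- main case split
  rcases le_or_gt (L₁ * r) 0 with hcase | hcase
  · -- degenerate: all gradients at x and xt agree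
    have hΔ0 : ∀ i, Δ i = 0 := by
      intro i
      have h := hΔle i
      have : ‖Δ i‖ ≤ 0 := le_trans h hcase
      exact norm_le_zero_iff.mp this
    have hall : ∀ ι : Fin n → Fin N,
        ‖(1 / n : ℝ) • ∑ j : Fin n, (gradient (f (ι j)) x - gradient (f (ι j)) xt)
            + gradient (fun z => (1 / N : ℝ) * ∑ i : Fin N, f i z) xt
            - gradient (fun z => (1 / N : ℝ) * ∑ i : Fin N, f i z) x‖ ≤ β * M := by
      intro ι
      rw [hexpr ι]
      have hv0 : ∀ i, v i = 0 := by
        intro i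
        rw [hv]
        simp only
        rw [hΔ0 i, hbb]
        rw [show (∑ i : Fin N, Δ i) = 0 from Finset.sum_eq_zero fun i _ => hΔ0 i]
        simp
      rw [show (∑ j : Fin n, v (ι j)) = 0 from Finset.sum_eq_zero fun j _ => hv0 (ι j)]
      rw [smul_zero, norm_zero]
      positivity
    rw [Finset.filter_true_of_mem (fun ι _ => hall ι)]
    rw [Finset.card_univ, div_self (ne_of_gt htotpos)]
    linarith
  · -- main case
    have hrpos : 0 < r := by
      rcases le_or_gt r 0 with h | h
      · exfalso
        have : r = 0 := le_antisymm h hr0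
        rw [this, mul_zero] at hcase
        exact lt_irrefl 0 hcase
      · exact h
    have hL₁pos : 0 < L₁ := by nlinarith [hcase, hrpos]
    set u : ℝ := L₁ * r / P with hu
    have hu0 : 0 < u := by positivity
    have huP : L₁ * r = u * P := by rw [hu]; field_simp
    set a : ℝ := -Real.log ζ with ha
    have ha0 : 0 < a := by
      have := Real.log_neg hζ hζ1
      simp only [ha]; linarith
    have hM4 : max (‖s‖ ^ 4) (ε₁ ^ 4) = M ^ 2 := by
      rw [hM, show ‖s‖ ^ 4 = (‖s‖ ^ 2) ^ 2 from by ring,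
        show ε₁ ^ 4 = (ε₁ ^ 2) ^ 2 from by ring]
      exact sq_max_eq (by positivity) (by positivity)
    have hcoef : 8 * L₁ ^ 2 / (β ^ 2 * max (‖s‖ ^ 4) (ε₁ ^ 4)) * r ^ 2
        + 4 * L₁ / (3 * β * M) * r = 8 * u ^ 2 + 4 / 3 * u := by
      rw [hM4, hu, hP]
      field_simp
    have hlog : Real.log 2 + a ≤ Real.log (2 * (d + 1) / ζ) := by
      rw [Real.log_div (by positivity) (ne_of_gt hζ)]
      have h1 : Real.log 2 ≤ Real.log (2 * (d + 1)) := by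
        apply Real.log_le_log (by norm_num)
        have h2 : (0 : ℝ) ≤ (d : ℝ) := Nat.cast_nonneg d
        nlinarith
      simp only [ha]
      linarith
    have hsize' : (8 * u ^ 2 + 4 / 3 * u) * (Real.log 2 + a) ≤ (n : ℝ) := by
      rw [← hcoef]
      calc (8 * L₁ ^ 2 / (β ^ 2 * max (‖s‖ ^ 4) (ε₁ ^ 4)) * r ^ 2
            + 4 * L₁ / (3 * β * M) * r) * (Real.log 2 + a)
          ≤ (8 * L₁ ^ 2 / (β ^ 2 * max (‖s‖ ^ 4) (ε₁ ^ 4)) * r ^ 2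
            + 4 * L₁ / (3 * β * M) * r) * Real.log (2 * (d + 1) / ζ) := by
            apply mul_le_mul_of_nonneg_left hlog
            rw [hcoef]; positivity
        _ ≤ (n : ℝ) := hsize
    obtain ⟨hux, hweak⟩ := numeric_core hu0 ha0 (le_refl _) hsize'
    set X : ℝ := Real.sqrt (n : ℝ) with hX
    have hX0 : 0 < X := lt_trans hu0 hux
    have hX2 : X ^ 2 = (n : ℝ) := Real.sq_sqrt (by positivity)
    set W : ℝ := (L₁ * r) ^ 2 with hW
    have hW0 : 0 < W := by positivity
    set R₀ : ℝ := 2 * (L₁ * r) with hR₀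
    have hR₀0 : 0 < R₀ := by positivity
    have hvR : ∀ i i' : Fin N, ‖v i - v i'‖ ≤ R₀ := by
      intro i i'
      have hvv : v i - v i' = Δ i - Δ i' := by rw [hv]; simp only; abel
      rw [hvv, hR₀]
      calc ‖Δ i - Δ i'‖ ≤ ‖Δ i‖ + ‖Δ i'‖ := norm_sub_le _ _
        _ ≤ L₁ * r + L₁ * r := add_le_add (hΔle i) (hΔle i')
        _ = 2 * (L₁ * r) := by ring
    have hvW : ∑ i : Fin N, ‖v i‖ ^ 2 ≤ (Fintype.card (Fin N) : ℝ) * W := by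
      have hsumΔ : ∑ i : Fin N, Δ i = (N : ℝ) • bb := by
        rw [hbb, smul_smul]
        rw [show (N : ℝ) * (1 / N) = 1 from by field_simp]
        rw [one_smul]
      have hexpand : ∀ i : Fin N, ‖v i‖ ^ 2
          = ‖Δ i‖ ^ 2 - 2 * inner ℝ (Δ i) bb + ‖bb‖ ^ 2 := by
        intro i
        rw [hv]
        simp only
        exact norm_sub_sq_real _ _
      calc ∑ i : Fin N, ‖v i‖ ^ 2
          = ∑ i : Fin N, ‖Δ i‖ ^ 2 - 2 * inner ℝ (∑ i : Fin N, Δ i) bb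
            + (N : ℝ) * ‖bb‖ ^ 2 := by
            rw [Finset.sum_congr rfl fun i _ => hexpand i]
            rw [Finset.sum_add_distrib, Finset.sum_sub_distrib, Finset.sum_const,
              Finset.card_univ, Fintype.card_fin, nsmul_eq_mul]
            congr 2
            rw [← Finset.mul_sum, ← sum_inner]
        _ = ∑ i : Fin N, ‖Δ i‖ ^ 2 - (N : ℝ) * ‖bb‖ ^ 2 := by
            rw [hsumΔ, real_inner_smul_left, real_inner_self_eq_norm_sq]
            ring
        _ ≤ ∑ i : Fin N, ‖Δ i‖ ^ 2 := by
            have hNpos : (0:ℝ) < (N : ℝ) := by exact_mod_cast hN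
            nlinarith [sq_nonneg ‖bb‖, hNpos]
        _ ≤ ∑ i : Fin N, W := by
            apply Finset.sum_le_sum
            intro i _
            rw [hW]
            have h := hΔle i
            nlinarith [norm_nonneg (Δ i)]
        _ = (Fintype.card (Fin N) : ℝ) * W := by
            rw [Finset.sum_const, Finset.card_univ, nsmul_eq_mul]
    have hsqrtW : Real.sqrt ((n : ℝ) * W) = X * (L₁ * r) := by
      rw [hW, Real.sqrt_mul (by positivity), Real.sqrt_sq (by positivity), hX]
    have hε : Real.sqrt ((n : ℝ) * W) < (n : ℝ) * P := by
      rw [hsqrtW, huP, ← hX2]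
      have h3 : X * (u * P) < X * (X * P) := by
        apply mul_lt_mul_of_pos_left _ hX0
        exact mul_lt_mul_of_pos_right hux hP0
      calc X * (u * P) < X * (X * P) := h3
        _ = X ^ 2 * P := by ring
    have htail := tail_count v hvzero R₀ W hR₀0 hW0 hvR hvW n ((n : ℝ) * P) hε
    have hs₀ : (n : ℝ) * P - Real.sqrt ((n : ℝ) * W) = P * (X * X - X * u) := by
      rw [hsqrtW, huP, ← hX2]; ring
    have hexpbound : Real.exp (-((n : ℝ) * P - Real.sqrt ((n : ℝ) * W)) ^ 2
        / (2 * (2 * (n : ℝ) * W + R₀ * ((n : ℝ) * P - Real.sqrt ((n : ℝ) * W)) / 3))) ≤ ζ := by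
      have hspos : 0 < (n : ℝ) * P - Real.sqrt ((n : ℝ) * W) := by linarith [hε]
      have hden : 0 < 2 * (2 * (n : ℝ) * W + R₀ * ((n : ℝ) * P - Real.sqrt ((n : ℝ) * W)) / 3) := by
        have h2 : (0:ℝ) ≤ 2 * (n : ℝ) * W := by positivity
        have h3 : 0 < R₀ * ((n : ℝ) * P - Real.sqrt ((n : ℝ) * W)) / 3 := by positivity
        linarith
      rw [show ζ = Real.exp (Real.log ζ) from (Real.exp_log hζ).symm]
      apply Real.exp_le_exp.mpr
      have hgoal : a ≤ ((n : ℝ) * P - Real.sqrt ((n : ℝ) * W)) ^ 2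
          / (2 * (2 * (n : ℝ) * W + R₀ * ((n : ℝ) * P - Real.sqrt ((n : ℝ) * W)) / 3)) := by
        rw [le_div_iff₀ hden]
        rw [hs₀, hW, hR₀, huP, ← hX2]
        exact chern_arith ha0 hu0 hX0 hP0 hweak
      have hloga : Real.log ζ = -a := by rw [ha]; ring
      rw [hloga]
      rw [neg_div]
      exact neg_le_neg hgoal
    have hqbound : (((Finset.univ.filter fun ι : Fin n → Fin N =>
        (n : ℝ) * P < ‖∑ j, v (ι j)‖).card : ℝ)) ≤ ζ * (N : ℝ) ^ n := by
      calc (((Finset.univ.filter fun ι : Fin n → Fin N =>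
            (n : ℝ) * P < ‖∑ j, v (ι j)‖).card : ℝ))
          ≤ (Fintype.card (Fin N) : ℝ) ^ n
            * Real.exp (-((n : ℝ) * P - Real.sqrt ((n : ℝ) * W)) ^ 2
              / (2 * (2 * (n : ℝ) * W + R₀ * ((n : ℝ) * P - Real.sqrt ((n : ℝ) * W)) / 3))) :=
            htail
        _ ≤ (Fintype.card (Fin N) : ℝ) ^ n * ζ :=
            mul_le_mul_of_nonneg_left hexpbound (by positivity)
        _ = ζ * (N : ℝ) ^ n := by rw [Fintype.card_fin]; ring
    have himp : ∀ ι : Fin n → Fin N, ¬ ((n : ℝ) * P < ‖∑ j, v (ι j)‖) →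
        ‖(1 / n : ℝ) • ∑ j : Fin n, (gradient (f (ι j)) x - gradient (f (ι j)) xt)
            + gradient (fun z => (1 / N : ℝ) * ∑ i : Fin N, f i z) xt
            - gradient (fun z => (1 / N : ℝ) * ∑ i : Fin N, f i z) x‖ ≤ P := by
      intro ι hι
      rw [not_lt] at hι
      rw [hexpr ι]
      rw [norm_smul]
      have h1 : ‖(1 / n : ℝ)‖ = 1 / (n : ℝ) := by
        rw [Real.norm_eq_abs, abs_of_pos (by positivity : (0:ℝ) < 1 / (n:ℝ))]
      rw [h1]
      rw [div_mul_eq_mul_div, one_mul, div_le_iff₀ (by exact_mod_cast hn : (0:ℝ) < (n:ℝ))]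
      linarith [hι]
    rw [le_div_iff₀ htotpos]
    have hsub : (Finset.univ.filter fun ι : Fin n → Fin N =>
          ¬ ((n : ℝ) * P < ‖∑ j, v (ι j)‖))
        ⊆ (Finset.univ.filter fun ι : Fin n → Fin N =>
          ‖(1 / n : ℝ) • ∑ j : Fin n, (gradient (f (ι j)) x - gradient (f (ι j)) xt)
            + gradient (fun z => (1 / N : ℝ) * ∑ i : Fin N, f i z) xt
            - gradient (fun z => (1 / N : ℝ) * ∑ i : Fin N, f i z) x‖ ≤ P) := by
      apply Finset.monotone_filter_right
      intro ι _ hι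
      exact himp ι hι
    have hcompl := Finset.card_filter_add_card_filter_not
      (s := (Finset.univ : Finset (Fin n → Fin N)))
      (p := fun ι : Fin n → Fin N => (n : ℝ) * P < ‖∑ j, v (ι j)‖)
    rw [Finset.card_univ] at hcompl
    have hcard1 : ((Finset.univ.filter fun ι : Fin n → Fin N =>
          ¬ ((n : ℝ) * P < ‖∑ j, v (ι j)‖)).card : ℝ)
        ≤ ((Finset.univ.filter fun ι : Fin n → Fin N =>
          ‖(1 / n : ℝ) • ∑ j : Fin n, (gradient (f (ι j)) x - gradient (f (ι j)) xt)
            + gradient (fun z => (1 / N : ℝ) * ∑ i : Fin N, f i z) xt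
            - gradient (fun z => (1 / N : ℝ) * ∑ i : Fin N, f i z) x‖ ≤ P).card : ℝ) := by
      exact_mod_cast Finset.card_le_card hsub
    have hcompl' : ((Finset.univ.filter fun ι : Fin n → Fin N =>
          (n : ℝ) * P < ‖∑ j, v (ι j)‖).card : ℝ)
        + ((Finset.univ.filter fun ι : Fin n → Fin N =>
          ¬ ((n : ℝ) * P < ‖∑ j, v (ι j)‖)).card : ℝ)
        = (Fintype.card (Fin n → Fin N) : ℝ) := by
      exact_mod_cast hcompl
    rw [← htotal] at hqbound
    linarith [hqbound, hcard1, hcompl']
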